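/- For every real x with 0 ≤ x < 1, the series ∑_{k=0}^∞ θ(k)·x^k converges and its sum equals 1 − (1 + 1/√(1−x))^{−2}. -/

import Mathlib

/-- The critical offspring distribution: θ(k) = 3·(2k−1)!! / (2^{k+1}·(k+2)!),
with (2k−1)!! read as 1 when k = 0 (natural subtraction gives 0!! = 1). -/
noncomputable def theta (k : ℕ) : ℝ :=
  3 * (Nat.doubleFactorial (2 * k - 1) : ℝ) / (2 ^ (k + 1) * (Nat.factorial (k + 2) : ℝ))


open Finset MeasureTheory intervalIntegral

lemma centralBinom_le_four_pow (n : ℕ) : Nat.centralBinom n ≤ 4 ^ n := by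
  have h : Nat.centralBinom n ≤ ∑ m ∈ range (2 * n + 1), (2 * n).choose m := by
    exact Finset.single_le_sum (f := fun m => (2*n).choose m) (fun i _ => Nat.zero_le _)
      (by simp [Finset.mem_range]; omega)
  calc Nat.centralBinom n ≤ 2 ^ (2 * n) := by simpa [Nat.sum_range_choose] using h
    _ = 4 ^ n := by rw [pow_mul]; norm_num

lemma catalan_le_four_pow (n : ℕ) : (catalan n : ℝ) ≤ 4 ^ n := by
  have h1 : catalan n ≤ Nat.centralBinom n := by
    calc catalan n ≤ (n+1) * catalan n := Nat.le_mul_of_pos_left _ (by omega)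
      _ = Nat.centralBinom n := succ_mul_catalan_eq_centralBinom n
  exact_mod_cast h1.trans (centralBinom_le_four_pow n)

lemma df_key : ∀ k : ℕ, 2 ^ k * k.factorial * Nat.doubleFactorial (2 * k - 1) = (2 * k).factorial
  | 0 => rfl
  | (n+1) => by
      have h1 : 2 * (n+1) = (2*n+1) + 1 := by ring
      have h2 : (2*n+1+1).factorial = (2*n+1+1).doubleFactorial * (2*n+1).doubleFactorial :=
        Nat.factorial_eq_mul_doubleFactorial (2*n+1)
      have h3 : (2 * (n+1)).doubleFactorial = 2 ^ (n+1) * (n+1).factorial :=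
        Nat.doubleFactorial_two_mul (n+1)
      have h4 : 2 * (n+1) - 1 = 2*n+1 := by omega
      rw [h4, h1, h2, ← h1, h3]

lemma theta_eq (k : ℕ) : theta k = 3 / 2 * (catalan k : ℝ) / ((k + 2) * 4 ^ k) := by
  have hdf : (2:ℝ) ^ k * k.factorial * (Nat.doubleFactorial (2 * k - 1) : ℝ)
      = ((2 * k).factorial : ℝ) := by exact_mod_cast congrArg (Nat.cast (R := ℝ)) (df_key k)
  have hcb : ((k:ℝ) + 1) * (catalan k : ℝ) = (Nat.centralBinom k : ℝ) := by
    exact_mod_cast congrArg (Nat.cast (R := ℝ)) (succ_mul_catalan_eq_centralBinom k)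
  have hcb2 : (Nat.centralBinom k : ℝ) * k.factorial * k.factorial = ((2*k).factorial : ℝ) := by
    have := Nat.choose_mul_factorial_mul_factorial (show k ≤ 2*k by omega)
    have h2 : 2*k - k = k := by omega
    rw [h2] at this
    exact_mod_cast congrArg (Nat.cast (R := ℝ)) this
  have hfac : ((k+2).factorial : ℝ) = (k.factorial : ℝ) * (k+1) * (k+2) := by
    rw [Nat.factorial_succ, Nat.factorial_succ]; push_cast; ring
  have hk0 : (k.factorial : ℝ) ≠ 0 := by positivity
  have h2k : ((2:ℝ)^k) ≠ 0 := by positivity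
  have hD : (Nat.doubleFactorial (2*k-1) : ℝ) = ((2*k).factorial : ℝ) / (2^k * k.factorial) := by
    rw [eq_div_iff (by positivity)]
    linarith [hdf]
  have hcatpos : (0:ℝ) < (k:ℝ) + 1 := by positivity
  have hcat : (catalan k : ℝ) = ((2*k).factorial : ℝ) / (k.factorial * k.factorial * ((k:ℝ)+1)) := by
    rw [eq_div_iff (by positivity)]
    nlinarith [hcb, hcb2]
  have hfp : (0:ℝ) < ((2*k).factorial : ℝ) := by positivity
  rw [theta, hfac, hD, hcat]
  have h4 : (4:ℝ)^k = 2^(k*2) := by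
    rw [mul_comm, pow_mul]; norm_num
  field_simp
  rw [h4]
  ring

noncomputable def Y (t : ℝ) : ℝ := ∑' k, (catalan k : ℝ) * t ^ k

lemma summable_cat {t : ℝ} (h0 : 0 ≤ t) (h1 : t < 1/4) :
    Summable (fun k => (catalan k : ℝ) * t ^ k) := by
  apply Summable.of_nonneg_of_le (fun k => by positivity)
    (fun k => ?_) (summable_geometric_of_lt_one (by positivity) (show 4*t < 1 by linarith))
  calc (catalan k : ℝ) * t ^ k ≤ 4 ^ k * t ^ k :=
        mul_le_mul_of_nonneg_right (catalan_le_four_pow k) (by positivity)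
    _ = (4*t) ^ k := by rw [mul_pow]

set_option maxHeartbeats 1000000 in
lemma Y_quadratic {t : ℝ} (h0 : 0 ≤ t) (h1 : t < 1/4) : Y t = 1 + t * (Y t * Y t) := by
  have hs := summable_cat h0 h1
  have hnorm : Summable (fun k => ‖(catalan k : ℝ) * t ^ k‖) := by
    apply hs.congr
    intro k
    rw [Real.norm_eq_abs, abs_of_nonneg (by positivity)]
  have hmul : Y t * Y t = ∑' n, (catalan (n+1) : ℝ) * t ^ n := by
    rw [Y, tsum_mul_tsum_eq_tsum_sum_antidiagonal_of_summable_norm hnorm hnorm]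
    apply tsum_congr
    intro n
    rw [catalan_succ' n]
    push_cast
    rw [Finset.sum_mul]
    apply Finset.sum_congr rfl
    intro ij hij
    have := Finset.HasAntidiagonal.mem_antidiagonal.mp hij
    rw [← this]
    ring
  have hs1 : Summable (fun n => (catalan (n+1) : ℝ) * t ^ (n+1)) :=
    (summable_nat_add_iff 1).mpr hs
  have h0' : Y t = 1 + ∑' n, (catalan (n+1) : ℝ) * t ^ (n+1) := by
    rw [Y, Summable.tsum_eq_zero_add hs]
    simp
  rw [hmul, h0', ← tsum_mul_left]
  congr 1
  apply tsum_congr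
  intro n
  ring

lemma Y_zero : Y 0 = 1 := by
  rw [Y, tsum_eq_single 0 (fun b hb => by simp [zero_pow hb])]
  simp

lemma Y_contOn {t : ℝ} (h0 : 0 ≤ t) (h1 : t < 1/4) : ContinuousOn Y (Set.Icc 0 t) := by
  apply continuousOn_tsum (u := fun k => (catalan k : ℝ) * t ^ k)
    (fun k => (continuous_const.mul (continuous_pow k)).continuousOn) (summable_cat h0 h1)
  intro n x hx
  simp only [Pi.mul_apply]
  rw [Real.norm_eq_abs, abs_mul, abs_pow, abs_of_nonneg (Nat.cast_nonneg _),
    abs_of_nonneg hx.1]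
  exact mul_le_mul_of_nonneg_left (pow_le_pow_left₀ hx.1 hx.2 n) (Nat.cast_nonneg _)

lemma Y_sq {s : ℝ} (h0 : 0 ≤ s) (h1 : s < 1/4) : (2*s*Y s - 1)^2 = 1 - 4*s := by
  have h := Y_quadratic h0 h1
  nlinarith [h]

lemma Y_neg {t : ℝ} (h0 : 0 ≤ t) (h1 : t < 1/4) : 2*t*Y t - 1 < 0 := by
  by_contra h
  push_neg at h
  have hc : ContinuousOn (fun s => 2*s*Y s - 1) (Set.Icc 0 t) :=
    (continuousOn_const.mul continuousOn_id |>.mul (Y_contOn h0 h1)).sub continuousOn_const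
  have h00 : (2*(0:ℝ)*Y 0 - 1) = -1 := by rw [Y_zero]; ring
  have : (0:ℝ) ∈ Set.Icc (2*(0:ℝ)*Y 0 - 1) (2*t*Y t - 1) := by
    rw [h00]; constructor <;> linarith
  obtain ⟨s, hs, hs0⟩ := intermediate_value_Icc h0 hc this
  have hsq := Y_sq hs.1 (lt_of_le_of_lt hs.2 h1)
  simp only at hs0
  rw [hs0] at hsq
  norm_num at hsq
  linarith [lt_of_le_of_lt hs.2 h1]

lemma sY_eq {s : ℝ} (h0 : 0 ≤ s) (h1 : s < 1/4) :
    s * Y s = (1 - Real.sqrt (1 - 4*s)) / 2 := by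
  have hsq := Y_sq h0 h1
  have hneg := Y_neg h0 h1
  have h : Real.sqrt (1 - 4*s) = 1 - 2*s*Y s := by
    rw [show (1 : ℝ) - 4*s = (1 - 2*s*Y s)^2 by linarith [hsq]]
    exact Real.sqrt_sq (by linarith)
  rw [h]; ring

lemma ftc_sqrt {t : ℝ} (h0 : 0 ≤ t) (h1 : t < 1/4) :
    ∫ s in (0:ℝ)..t, (1 - Real.sqrt (1 - 4*s)) / 2
      = t/2 + ((1-4*t) * Real.sqrt (1-4*t) - 1)/12 := by
  have key : ∀ x ∈ Set.uIcc (0:ℝ) t,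
      HasDerivAt (fun s => s/2 + ((1-4*s) * Real.sqrt (1-4*s))/12)
        ((1 - Real.sqrt (1 - 4*x)) / 2) x := by
    intro x hx
    rw [Set.uIcc_of_le h0] at hx
    have hxlt : (0:ℝ) < 1 - 4*x := by
      have := hx.2; nlinarith [hx.1]
    have hS : (0:ℝ) < Real.sqrt (1 - 4*x) := Real.sqrt_pos.mpr hxlt
    have hS2 : Real.sqrt (1-4*x) ^ 2 = 1 - 4*x := Real.sq_sqrt hxlt.le
    have h1' : HasDerivAt (fun s : ℝ => 1 - 4*s) (-4) x := by
      simpa using ((hasDerivAt_id x).const_mul (4:ℝ)).const_sub (1:ℝ)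
    have h2 : HasDerivAt (fun s : ℝ => Real.sqrt (1 - 4*s))
        (1 / (2 * Real.sqrt (1-4*x)) * (-4)) x :=
      (Real.hasDerivAt_sqrt hxlt.ne').comp x h1'
    have h3 := ((hasDerivAt_id x).div_const 2).add ((h1'.mul h2).div_const 12)
    convert h3 using 1
    · rfl
    · rfl
    · funext s; simp only [Pi.add_apply, Pi.mul_apply, id]
    field_simp
    nlinarith [hS2, hS]
  rw [intervalIntegral.integral_eq_sub_of_hasDerivAt key
    ((Continuous.intervalIntegrable (by fun_prop) 0 t))]
  simp [Real.sqrt_one]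
  ring

lemma hasSum_int {t : ℝ} (h0 : 0 ≤ t) (h1 : t < 1/4) :
    HasSum (fun k => (catalan k : ℝ) * t ^ (k+2) / (k+2))
      (t/2 + ((1-4*t) * Real.sqrt (1-4*t) - 1)/12) := by
  set f : ℕ → C(ℝ, ℝ) := fun k => ⟨fun s => (catalan k : ℝ) * s ^ (k+1), by fun_prop⟩ with hf
  have hbound : Summable (fun k => ‖(f k).restrict (⟨Set.uIcc 0 t, isCompact_uIcc⟩ :
      TopologicalSpace.Compacts ℝ)‖) := by
    have hu : Summable (fun k => t * ((catalan k : ℝ) * t ^ k)) := (summable_cat h0 h1).mul_left t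
    apply Summable.of_nonneg_of_le (fun k => norm_nonneg _) (fun k => ?_) hu
    refine (ContinuousMap.norm_le _ (by positivity)).mpr ?_
    rintro ⟨x, hx⟩
    have hx' : x ∈ Set.Icc 0 t := by
      rw [← Set.uIcc_of_le h0]; exact hx
    simp only [ContinuousMap.restrict_apply, hf, ContinuousMap.coe_mk]
    rw [Real.norm_eq_abs, abs_mul, abs_pow, abs_of_nonneg (Nat.cast_nonneg _),
      abs_of_nonneg hx'.1]
    calc (catalan k : ℝ) * x ^ (k+1) ≤ (catalan k : ℝ) * t ^ (k+1) :=
          mul_le_mul_of_nonneg_left (pow_le_pow_left₀ hx'.1 hx'.2 _) (Nat.cast_nonneg _)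
      _ = t * ((catalan k : ℝ) * t ^ k) := by ring
  have key := hasSum_intervalIntegral_of_summable_norm (a := 0) (b := t) hbound
  have hint : ∀ k : ℕ, (∫ x in (0:ℝ)..t, f k x) = (catalan k : ℝ) * t ^ (k+2) / (k+2) := by
    intro k
    simp only [hf, ContinuousMap.coe_mk]
    rw [intervalIntegral.integral_const_mul, integral_pow]
    push_cast
    ring
  have hval : (∫ x in (0:ℝ)..t, ∑' k, f k x)
      = t/2 + ((1-4*t) * Real.sqrt (1-4*t) - 1)/12 := by
    rw [← ftc_sqrt h0 h1]
    apply intervalIntegral.integral_congr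
    intro s hs
    rw [Set.uIcc_of_le h0] at hs
    have hs4 : s < 1/4 := lt_of_le_of_lt hs.2 h1
    simp only [hf, ContinuousMap.coe_mk]
    rw [← sY_eq hs.1 hs4, Y, ← tsum_mul_left]
    exact tsum_congr (fun k => by ring)
  rw [hval] at key
  exact key.congr_fun (fun k => (hint k).symm)

lemma value_eq {x u : ℝ} (hx : 0 < x) (hx1 : x < 1) (hu0 : 0 < u) (hu2 : u^2 = 1-x) :
    (3/2)/(x/4)^2 * ((x/4)/2 + ((1-4*(x/4)) * u - 1)/12) = 1 - (1+1/u)^(-2:ℤ) := by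
  have hu1 : u ≠ 0 := hu0.ne'
  have h1u : 1 + 1/u ≠ 0 := by positivity
  have hxne : x ≠ 0 := hx.ne'
  rw [zpow_neg, show ((2:ℤ)) = ((2:ℕ) : ℤ) from rfl, zpow_natCast]
  have hxu : x = 1 - u^2 := by linarith
  field_simp
  rw [hxu]
  ring


/-- For 0 ≤ x < 1, the series ∑ θ(k)·x^k converges with sum
1 − (1 + 1/√(1−x))^{−2}. -/
theorem theta_generating_function (x : ℝ) (hx0 : 0 ≤ x) (hx1 : x < 1) :
    HasSum (fun k : ℕ => theta k * x ^ k)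
      (1 - (1 + 1 / Real.sqrt (1 - x)) ^ (-2 : ℤ)) := by
  rcases eq_or_lt_of_le hx0 with h0 | hpos
  · have h := hasSum_single (f := fun k : ℕ => theta k * x ^ k) 0
      (fun b hb => by rw [← h0]; simp [zero_pow hb])
    convert h using 1
    rw [← h0]
    have ht0 : theta 0 = 3/4 := by
      norm_num [theta, Nat.doubleFactorial, Nat.factorial]
    simp [ht0, Real.sqrt_one]
    norm_num
  · have ht0 : (0:ℝ) ≤ x/4 := by linarith
    have ht4 : x/4 < 1/4 := by linarith
    have htne : x/4 ≠ 0 := by positivity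
    have key := (hasSum_int ht0 ht4).mul_left ((3/2) / (x/4)^2)
    have hu0 : 0 < Real.sqrt (1-x) := Real.sqrt_pos.mpr (by linarith)
    have hu2 : Real.sqrt (1-x)^2 = 1-x := Real.sq_sqrt (by linarith)
    have h14 : 1 - 4*(x/4) = 1 - x := by ring
    rw [h14] at key
    rw [← value_eq hpos hx1 hu0 hu2, h14]
    apply key.congr_fun
    intro k
    rw [theta_eq k]
    have hx4 : x ^ k = 4^k * (x/4)^k := by
      rw [← mul_pow]; congr 1; ring
    rw [hx4]
    have h4 : ((4:ℝ))^k ≠ 0 := by positivity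
    have hk2 : ((k:ℝ)+2) ≠ 0 := by positivity
    field_simp
    ring
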